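/- Let $\mathbb{W}$ be a random field indexed by $\mathcal{B}_0(\mathbb{R}^d)$ whose finite dimensional generating functions are $\tfrac12\hat{\mathbb{E}}[\langle Q\mathbb{W}_{\underline{\gamma}},\mathbb{W}_{\underline{\gamma}}\rangle]=G(\sum_{i,j}q_{ij}\lambda(A_i\cap A_j))$. If $A_1,A_2\in\mathcal{B}_0(\mathbb{R}^d)$ are disjoint and $A_3=A_1\cup A_2$, then $\hat{\mathbb{E}}[(\mathbb{W}_{A_1}+\mathbb{W}_{A_2}-\mathbb{W}_{A_3})^2]=0$, i.e. $\mathbb{W}$ is finitely additive quasi-surely. -/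
import Mathlib


open MeasureTheory

structure SublinearExp (Ω : Type) where
  E : (Ω → ℝ) → ℝ
  mono : ∀ X Y : Ω → ℝ, (∀ ω, X ω ≤ Y ω) → E X ≤ E Y
  const : ∀ c : ℝ, E (fun _ => c) = c
  subadd : ∀ X Y : Ω → ℝ, E (fun ω => X ω + Y ω) ≤ E X + E Y
  poshom : ∀ (l : ℝ) (X : Ω → ℝ), 0 ≤ l → E (fun ω => l * X ω) = l * E X

/-- `G(a) = ½ σ̄² a⁺ − ½ σ̲² a⁻`. -/
noncomputable def Gscal (sl su a : ℝ) : ℝ := (1 / 2) * su * max a 0 - (1 / 2) * sl * max (-a) 0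

/-- For disjoint `A₁, A₂` of finite measure and `A₃ = A₁ ∪ A₂`,
`Ê[(𝕎_{A₁} + 𝕎_{A₂} - 𝕎_{A₃})²] = 0`, i.e. `𝕎` is finitely additive quasi-surely. -/
theorem stmt_11 {Ω : Type} (S : SublinearExp Ω) (d : ℕ) (sl su : ℝ)
    (hsl : 0 ≤ sl) (hsu : sl ≤ su)
    (W : Set (Fin d → ℝ) → Ω → ℝ)
    -- the finite dimensional generating functions of the random field `W`
    (hgen : ∀ (n : ℕ) (A : Fin n → Set (Fin d → ℝ)),
      (∀ i, MeasurableSet (A i)) → (∀ i, volume (A i) < ⊤) →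
      ∀ Q : Matrix (Fin n) (Fin n) ℝ, Q.IsSymm →
      (1 / 2) * S.E (fun ω => ∑ i, ∑ j, Q i j * W (A i) ω * W (A j) ω)
        = Gscal sl su (∑ i, ∑ j, Q i j * (volume (A i ∩ A j)).toReal))
    (A₁ A₂ : Set (Fin d → ℝ)) (h1 : MeasurableSet A₁) (h2 : MeasurableSet A₂)
    (h1f : volume A₁ < ⊤) (h2f : volume A₂ < ⊤) (hdisj : Disjoint A₁ A₂) :
    S.E (fun ω => (W A₁ ω + W A₂ ω - W (A₁ ∪ A₂) ω) ^ 2) = 0 := by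
  set A : Fin 3 → Set (Fin d → ℝ) := ![A₁, A₂, A₁ ∪ A₂] with hA
  have hmeas : ∀ i, MeasurableSet (A i) := by
    intro i; fin_cases i <;> simp [hA] <;> first | exact h1 | exact h2 | exact h1.union h2
  have hfin : ∀ i, volume (A i) < ⊤ := by
    intro i; fin_cases i <;> simp [hA] <;>
      first
        | exact h1f
        | exact h2f
        | exact ⟨h1f, h2f⟩
  set Q : Matrix (Fin 3) (Fin 3) ℝ := !![1, 1, -1; 1, 1, -1; -1, -1, 1] with hQ
  have hsym : Q.IsSymm := by
    ext i j; fin_cases i <;> fin_cases j <;> simp [hQ, Matrix.transpose]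
  have key := hgen 3 A hmeas hfin Q hsym
  have hfun : (fun ω => ∑ i, ∑ j, Q i j * W (A i) ω * W (A j) ω)
      = (fun ω => (W A₁ ω + W A₂ ω - W (A₁ ∪ A₂) ω) ^ 2) := by
    funext ω
    simp [Fin.sum_univ_three, hA, hQ]
    ring
  have h12 : volume (A₁ ∩ A₂) = 0 := by
    rw [Set.disjoint_iff_inter_eq_empty.mp hdisj]; simp
  have h13 : A₁ ∩ (A₁ ∪ A₂) = A₁ := Set.inter_union_distrib_left _ _ _ ▸ by
    simp [Set.inter_eq_self_of_subset_left Set.subset_union_left]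
  have hsum : (∑ i, ∑ j, Q i j * (volume (A i ∩ A j)).toReal) = 0 := by
    have h3 : volume (A₁ ∪ A₂) = volume A₁ + volume A₂ :=
      measure_union hdisj h2
    simp [Fin.sum_univ_three, hA, hQ, h12, Set.inter_comm A₂ A₁,
      Set.inter_eq_self_of_subset_left (Set.subset_union_left : A₁ ⊆ A₁ ∪ A₂),
      Set.inter_eq_self_of_subset_left (Set.subset_union_right : A₂ ⊆ A₁ ∪ A₂),
      Set.inter_eq_self_of_subset_right (Set.subset_union_left : A₁ ⊆ A₁ ∪ A₂),
      Set.inter_eq_self_of_subset_right (Set.subset_union_right : A₂ ⊆ A₁ ∪ A₂),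
      h3, ENNReal.toReal_add h1f.ne h2f.ne]
    ring
  rw [hfun, hsum] at key
  have : Gscal sl su 0 = 0 := by simp [Gscal]
  rw [this] at key
  linarith
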